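/- arXiv:1807.07554 — 6 statements merged into one kernel-verified Lean document; each statement's English description precedes it below -/
import Mathlib

section
/- Let V : ℝⁿ → ℝ be continuous and bounded below, x ∈ ℝⁿ, d a unit vector, and τ > 0. Then either there exists β ≠ 0 such that (V(x - τβd) - V(x))/(τβ) = -β, or V is Clarke directionally stationary at x along d, i.e. min{V°(x; d), V°(x; -d)} ≥ 0. -/
open scoped InnerProductSpace
open Metric Filter MeasureTheory

/-- The Clarke (generalised) directional derivative
`V°(x; d) = limsup_{y → x, λ ↓ 0} (V(y + λ d) - V(y))/λ`,
expressed as the infimum of eventual upper bounds. -/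
noncomputable def clarkeDir {n : ℕ} (V : EuclideanSpace ℝ (Fin n) → ℝ)
    (x d : EuclideanSpace ℝ (Fin n)) : ℝ :=
  sInf {r : ℝ | ∃ δ > 0, ∀ y ∈ ball x δ, ∀ l : ℝ, 0 < l → l < δ →
    (V (y + l • d) - V y) / l ≤ r}

/-- The Clarke subdifferential `∂V(x) = {p : V°(x; v) ≥ ⟨v, p⟩ for all v}`. -/
noncomputable def clarkeSubdiff {n : ℕ} (V : EuclideanSpace ℝ (Fin n) → ℝ)
    (x : EuclideanSpace ℝ (Fin n)) : Set (EuclideanSpace ℝ (Fin n)) :=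
  {p | ∀ v, ⟪v, p⟫_ℝ ≤ clarkeDir V x v}

/-- If `g β₀ < 0` for some `β₀ ≠ 0`, where `g β = V(x - τβ d) - V x + τ β²`,
then (by the IVT and coercivity of `g`) the Itoh–Abe equation has a nonzero root. -/
lemma itohAbe_root {n : ℕ} (V : EuclideanSpace ℝ (Fin n) → ℝ)
    (hV : Continuous V) (hbdd : BddBelow (Set.range V))
    (x d : EuclideanSpace ℝ (Fin n)) (τ : ℝ) (hτ : 0 < τ)
    (β₀ : ℝ) (hβ₀ : β₀ ≠ 0)
    (hneg : V (x - (τ * β₀) • d) - V x + τ * β₀ ^ 2 < 0) :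
    ∃ β : ℝ, β ≠ 0 ∧ (V (x - (τ * β) • d) - V x) / (τ * β) = -β := by
  obtain ⟨m, hm⟩ := hbdd
  set g : ℝ → ℝ := fun β => V (x - (τ * β) • d) - V x + τ * β ^ 2 with hg_def
  have hg : Continuous g := by
    apply Continuous.add
    · exact (hV.comp (continuous_const.sub
        (((continuous_const.mul continuous_id).smul continuous_const)))).sub continuous_const
    · exact continuous_const.mul (continuous_pow 2)
  have hmle : ∀ z, m ≤ V z := fun z => hm ⟨z, rfl⟩
  set B : ℝ := |β₀| + Real.sqrt ((V x - m) / τ) + 1 with hB_def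
  have hs : 0 ≤ (V x - m) / τ := div_nonneg (by linarith [hmle x]) hτ.le
  have hBpos : 0 < B := by positivity
  have hBge : Real.sqrt ((V x - m) / τ) + 1 ≤ B := by
    simp only [hB_def]; linarith [abs_nonneg β₀]
  have hBsq : V x - m < τ * B ^ 2 := by
    have h1 : (Real.sqrt ((V x - m) / τ) + 1) ^ 2 ≤ B ^ 2 := by
      apply pow_le_pow_left₀ (by positivity) hBge
    have h2 : (V x - m) / τ < (Real.sqrt ((V x - m) / τ) + 1) ^ 2 := by
      have := Real.sq_sqrt hs
      have hsq := Real.sqrt_nonneg ((V x - m) / τ)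
      nlinarith
    have : (V x - m) / τ < B ^ 2 := lt_of_lt_of_le h2 h1
    calc V x - m = ((V x - m) / τ) * τ := by field_simp
    _ < B ^ 2 * τ := by exact mul_lt_mul_of_pos_right this hτ
    _ = τ * B ^ 2 := by ring
  have hgB : ∀ b : ℝ, b ^ 2 = B ^ 2 → 0 < g b := by
    intro b hb
    have := hmle (x - (τ * b) • d)
    simp only [hg_def]
    rw [hb]
    linarith
  have hroot : ∀ β : ℝ, β ≠ 0 → g β = 0 →
      (V (x - (τ * β) • d) - V x) / (τ * β) = -β := by
    intro β hβ hg0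
    have hτβ : τ * β ≠ 0 := mul_ne_zero hτ.ne' hβ
    have : V (x - (τ * β) • d) - V x = -(τ * β ^ 2) := by
      simp only [hg_def] at hg0; linarith
    rw [this]
    field_simp
  rcases hβ₀.lt_or_gt with hlt | hlt
  · -- β₀ < 0 : root in [-B, β₀]
    have hle : -B ≤ β₀ := by
      have : β₀ ≤ |β₀| := le_abs_self β₀
      have h2 : -β₀ ≤ |β₀| := neg_le_abs β₀
      have := Real.sqrt_nonneg ((V x - m) / τ)
      simp [hB_def]; linarith
    have hsub := intermediate_value_Icc' hle hg.continuousOn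
    have h0 : (0 : ℝ) ∈ Set.Icc (g β₀) (g (-B)) := by
      constructor
      · exact hneg.le
      · exact (hgB (-B) (by ring)).le
    obtain ⟨β, hβmem, hβ0⟩ := hsub h0
    refine ⟨β, ?_, hroot β ?_ hβ0⟩
    · exact (lt_of_le_of_lt hβmem.2 hlt).ne
    · exact (lt_of_le_of_lt hβmem.2 hlt).ne
  · -- 0 < β₀ : root in [β₀, B]
    have hle : β₀ ≤ B := by
      have : β₀ ≤ |β₀| := le_abs_self β₀
      have := Real.sqrt_nonneg ((V x - m) / τ)
      simp [hB_def]; linarith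
    have hsub := intermediate_value_Icc hle hg.continuousOn
    have h0 : (0 : ℝ) ∈ Set.Icc (g β₀) (g B) := by
      constructor
      · exact hneg.le
      · exact (hgB B rfl).le
    obtain ⟨β, hβmem, hβ0⟩ := hsub h0
    refine ⟨β, ?_, hroot β ?_ hβ0⟩
    · exact (lt_of_lt_of_le hlt hβmem.1).ne'
    · exact (lt_of_lt_of_le hlt hβmem.1).ne'

/-- From a negative Clarke directional derivative extract a witness `r < 0`
with its uniform bound. -/
lemma clarkeDir_neg_witness {n : ℕ} (V : EuclideanSpace ℝ (Fin n) → ℝ)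
    (x e : EuclideanSpace ℝ (Fin n)) (h : clarkeDir V x e < 0) :
    ∃ r < 0, ∃ δ > 0, ∀ y ∈ ball x δ, ∀ l : ℝ, 0 < l → l < δ →
      (V (y + l • e) - V y) / l ≤ r := by
  set S := {r : ℝ | ∃ δ > 0, ∀ y ∈ ball x δ, ∀ l : ℝ, 0 < l → l < δ →
    (V (y + l • e) - V y) / l ≤ r} with hS
  have hne : S.Nonempty := by
    by_contra hemp
    rw [Set.not_nonempty_iff_eq_empty] at hemp
    have : clarkeDir V x e = 0 := by
      rw [clarkeDir, show {r : ℝ | ∃ δ > 0, ∀ y ∈ ball x δ, ∀ l : ℝ, 0 < l → l < δ →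
        (V (y + l • e) - V y) / l ≤ r} = S from rfl, hemp, Real.sInf_empty]
    linarith
  obtain ⟨r, hrS, hr⟩ := exists_lt_of_csInf_lt hne h
  exact ⟨r, hr, hrS⟩

/-- Existence of an Itoh–Abe step: either the discrete gradient equation has a
solution `β ≠ 0`, or `V` is Clarke directionally stationary at `x` along `d`. -/
theorem itohAbe_existence {n : ℕ} (V : EuclideanSpace ℝ (Fin n) → ℝ)
    (hV : Continuous V) (hbdd : BddBelow (Set.range V))
    (x d : EuclideanSpace ℝ (Fin n)) (hd : ‖d‖ = 1) (τ : ℝ) (hτ : 0 < τ) :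
    (∃ β : ℝ, β ≠ 0 ∧ (V (x - (τ * β) • d) - V x) / (τ * β) = -β) ∨
      0 ≤ min (clarkeDir V x d) (clarkeDir V x (-d)) := by
  by_cases h : 0 ≤ min (clarkeDir V x d) (clarkeDir V x (-d))
  · exact Or.inr h
  left
  push_neg at h
  rcases min_lt_iff.mp h with hneg | hneg
  · -- clarkeDir V x d < 0 : take β₀ < 0
    obtain ⟨r, hr, δ, hδ, hprop⟩ := clarkeDir_neg_witness V x d hneg
    set β₁ : ℝ := min (δ / (2 * τ)) (-r / 2) with hβ₁
    have hβ₁pos : 0 < β₁ := lt_min (by positivity) (by linarith)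
    have hl1 : 0 < τ * β₁ := by positivity
    have hl2 : τ * β₁ < δ := by
      have : β₁ ≤ δ / (2 * τ) := min_le_left _ _
      have h2 : τ * β₁ ≤ τ * (δ / (2 * τ)) := by nlinarith
      have h3 : τ * (δ / (2 * τ)) = δ / 2 := by field_simp
      linarith
    have hbd := hprop x (mem_ball_self hδ) (τ * β₁) hl1 hl2
    have hkey : V (x - (τ * (-β₁)) • d) - V x + τ * (-β₁) ^ 2 < 0 := by
      have heq : x - (τ * (-β₁)) • d = x + (τ * β₁) • d := by
        rw [mul_neg, neg_smul, sub_neg_eq_add]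
      rw [heq]
      have hVle : V (x + (τ * β₁) • d) - V x ≤ r * (τ * β₁) := by
        rw [div_le_iff₀ hl1] at hbd; linarith
      have hβ₁r : β₁ ≤ -r / 2 := min_le_right _ _
      nlinarith
    exact itohAbe_root V hV hbdd x d τ hτ (-β₁) (by linarith) hkey
  · -- clarkeDir V x (-d) < 0 : take β₀ > 0
    obtain ⟨r, hr, δ, hδ, hprop⟩ := clarkeDir_neg_witness V x (-d) hneg
    set β₁ : ℝ := min (δ / (2 * τ)) (-r / 2) with hβ₁
    have hβ₁pos : 0 < β₁ := lt_min (by positivity) (by linarith)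
    have hl1 : 0 < τ * β₁ := by positivity
    have hl2 : τ * β₁ < δ := by
      have : β₁ ≤ δ / (2 * τ) := min_le_left _ _
      have h2 : τ * β₁ ≤ τ * (δ / (2 * τ)) := by nlinarith
      have h3 : τ * (δ / (2 * τ)) = δ / 2 := by field_simp
      linarith
    have hbd := hprop x (mem_ball_self hδ) (τ * β₁) hl1 hl2
    have hkey : V (x - (τ * β₁) • d) - V x + τ * β₁ ^ 2 < 0 := by
      have heq : x + (τ * β₁) • (-d) = x - (τ * β₁) • d := by
        rw [smul_neg, ← sub_eq_add_neg]
      rw [heq] at hbd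
      have hVle : V (x - (τ * β₁) • d) - V x ≤ r * (τ * β₁) := by
        rw [div_le_iff₀ hl1] at hbd; linarith
      have hβ₁r : β₁ ≤ -r / 2 := min_le_right _ _
      nlinarith
    exact itohAbe_root V hV hbdd x d τ hτ β₁ (by linarith) hkey
end

section
/- Suppose V : ℝⁿ → ℝ is locally Lipschitz, bounded below, and coercive, and (x^k) are iterates of the Itoh–Abe method with time steps τ_k ∈ [τ_min, τ_max] (0 < τ_min ≤ τ_max) and a cyclically dense deterministic sequence of directions (d^k) in the unit sphere. Then every accumulation point x* of (x^k) satisfies 0 ∈ ∂V(x*). -/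
open scoped InnerProductSpace
open Metric Filter MeasureTheory
open scoped Topology

set_option maxHeartbeats 1600000

/-- Convergence of the deterministic Itoh–Abe method with cyclically dense
directions: every accumulation point of the iterates is Clarke stationary. -/
theorem deterministic_itohAbe_converges_to_stationary {n : ℕ}
    (V : EuclideanSpace ℝ (Fin n) → ℝ) (hV : LocallyLipschitz V)
    (hbdd : BddBelow (Set.range V))
    (hcoercive : ∀ M : ℝ, IsCompact {y : EuclideanSpace ℝ (Fin n) | V y ≤ M})
    (d : ℕ → EuclideanSpace ℝ (Fin n)) (hd : ∀ k, ‖d k‖ = 1)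
    (hcyc : ∀ ε > (0:ℝ), ∃ N : ℕ, ∀ k : ℕ, ∀ v : EuclideanSpace ℝ (Fin n),
      ‖v‖ = 1 → ∃ i < N, ‖v - d (k + i)‖ < ε)
    (τ : ℕ → ℝ) (τmin τmax : ℝ) (hτmin : 0 < τmin) (hτminmax : τmin ≤ τmax)
    (hτ : ∀ k, τ k ∈ Set.Icc τmin τmax)
    (x : ℕ → EuclideanSpace ℝ (Fin n))
    (hupdate : ∀ k,
      (∃ β : ℝ, β ≠ 0 ∧
        β = -((V (x k - (τ k * β) • d k) - V (x k)) / (τ k * β)) ∧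
        x (k+1) = x k - (τ k * β) • d k) ∨
      ((¬ ∃ β : ℝ, β ≠ 0 ∧
          β = -((V (x k - (τ k * β) • d k) - V (x k)) / (τ k * β))) ∧
        x (k+1) = x k)) :
    ∀ p : EuclideanSpace ℝ (Fin n), MapClusterPt p atTop x →
      (0 : EuclideanSpace ℝ (Fin n)) ∈ clarkeSubdiff V p := by
  have hVc : Continuous V := hV.continuous
  obtain ⟨B, hB⟩ := hbdd
  have hBle : ∀ y, B ≤ V y := fun y => hB ⟨y, rfl⟩
  have hτpos : ∀ k, 0 < τ k := fun k => lt_of_lt_of_le hτmin (hτ k).1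
  have hτmaxpos : 0 < τmax := lt_of_lt_of_le hτmin hτminmax
  -- the per-step decrease
  set e : ℕ → ℝ := fun k => V (x k) - V (x (k+1)) with he_def
  -- the value identity for any admissible β
  have hdec : ∀ k, ∀ β : ℝ, β ≠ 0 →
      β = -((V (x k - (τ k * β) • d k) - V (x k)) / (τ k * β)) →
      V (x k - (τ k * β) • d k) - V (x k) = -(τ k * β^2) := by
    intro k β hβ heq
    have hne : τ k * β ≠ 0 := mul_ne_zero (ne_of_gt (hτpos k)) hβ
    field_simp at heq
    rw [mul_comm β (τ k)] at heq
    have hQ : τ k * ((V (x k - (τ k * β) • d k) - V (x k)) / τ k) = V (x k - (τ k * β) • d k) - V (x k) := by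
      rw [← mul_div_assoc]
      exact mul_div_cancel_left₀ _ (ne_of_gt (hτpos k))
    linear_combination τ k * heq - hQ
  have hek : ∀ k, 0 ≤ e k ∧ ‖x (k+1) - x k‖^2 ≤ τmax * e k := by
    intro k
    rcases hupdate k with ⟨β, hβ, heq, hx1⟩ | ⟨_, hx1⟩
    · have h := hdec k β hβ heq
      have hej : e k = τ k * β^2 := by
        simp only [he_def]; rw [hx1]; linarith
      have hnorm : ‖x (k+1) - x k‖ = |τ k * β| := by
        have : x (k+1) - x k = -((τ k * β) • d k) := by rw [hx1]; abel
        rw [this, norm_neg, norm_smul, hd k, Real.norm_eq_abs, mul_one]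
      constructor
      · rw [hej]; exact mul_nonneg (hτpos k).le (sq_nonneg β)
      · rw [hnorm, hej, sq_abs]
        have hτk := (hτ k).2
        nlinarith [mul_nonneg (mul_nonneg (sub_nonneg.mpr hτk) (hτpos k).le) (sq_nonneg β)]
    · constructor
      · simp [he_def, hx1]
      · simp [he_def, hx1, sub_self]
  have he0 : Tendsto e atTop (𝓝 0) := by
    have hanti : Antitone fun k => V (x k) := by
      apply antitone_nat_of_succ_le
      intro k
      have h := (hek k).1
      simp only [he_def] at h
      linarith
    have hbdd2 : BddBelow (Set.range fun k => V (x k)) :=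
      ⟨B, by rintro _ ⟨k, rfl⟩; exact hBle _⟩
    have hae : Tendsto (fun k => V (x k)) atTop (𝓝 (⨅ k, V (x k))) :=
      tendsto_atTop_ciInf hanti hbdd2
    have h2 : Tendsto (fun k => V (x (k+1))) atTop (𝓝 (⨅ k, V (x k))) :=
      hae.comp (tendsto_add_atTop_nat 1)
    simpa using hae.sub h2
  have hs0 : Tendsto (fun k => ‖x (k+1) - x k‖) atTop (𝓝 0) := by
    have h1 : Tendsto (fun k => Real.sqrt (τmax * e k)) atTop (𝓝 0) := by
      have h2 : Tendsto (fun k => τmax * e k) atTop (𝓝 0) := by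
        simpa using he0.const_mul τmax
      have h3 := (Real.continuous_sqrt.tendsto 0).comp h2
      rw [Real.sqrt_zero] at h3
      exact h3
    refine squeeze_zero (fun k => norm_nonneg _) (fun k => ?_) h1
    rw [Real.le_sqrt (norm_nonneg _) (mul_nonneg hτmaxpos.le (hek k).1)]
    exact (hek k).2
  intro p hp v
  rw [inner_zero_right]
  refine Real.sInf_nonneg ?_
  rintro r ⟨δ, hδ, hr⟩
  rcases eq_or_ne v 0 with hv | hv
  · have h := hr p (mem_ball_self hδ) (δ/2) (by positivity) (by linarith)
    simpa [hv] using h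
  by_contra hr0
  push_neg at hr0
  -- the unit direction
  have hvpos : 0 < ‖v‖ := norm_pos_iff.mpr hv
  set u : EuclideanSpace ℝ (Fin n) := ‖v‖⁻¹ • v with hu_def
  have hu : ‖u‖ = 1 := norm_smul_inv_norm hv
  set r' : ℝ := r / ‖v‖ with hr'_def
  have hr'neg : r' < 0 := div_neg_of_neg_of_pos hr0 hvpos
  set δ₁ : ℝ := min δ (δ * ‖v‖) with hδ₁_def
  have hδ₁ : 0 < δ₁ := lt_min hδ (by positivity)
  -- descent along the unit direction u
  have hru : ∀ y ∈ ball p δ₁, ∀ l : ℝ, 0 < l → l < δ₁ →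
      V (y + l • u) - V y ≤ r' * l := by
    intro y hy l hl hlδ
    have hy' : y ∈ ball p δ := ball_subset_ball (min_le_left _ _) hy
    have hl' : 0 < l / ‖v‖ := by positivity
    have hl'2 : l / ‖v‖ < δ := by
      rw [div_lt_iff₀ hvpos]
      exact lt_of_lt_of_le hlδ (min_le_right _ _)
    have h := hr y hy' (l / ‖v‖) hl' hl'2
    have hpt : y + (l / ‖v‖) • v = y + l • u := by
      rw [hu_def, smul_smul, div_eq_mul_inv]
    rw [hpt, div_le_iff₀ hl'] at h
    calc V (y + l • u) - V y ≤ r * (l / ‖v‖) := h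
      _ = r' * l := by rw [hr'_def]; ring
  -- local Lipschitz constant
  obtain ⟨L, t, ht, hL⟩ := hV p
  obtain ⟨ρ, hρ, hρt⟩ := Metric.mem_nhds_iff.mp ht
  set c : ℝ := -r' / 2 with hc_def
  have hc : 0 < c := by rw [hc_def]; linarith
  set ε : ℝ := min (c / ((L : ℝ) + 1)) 1 with hε_def
  have hLnn : (0:ℝ) ≤ (L : ℝ) := L.coe_nonneg
  have hε : 0 < ε := lt_min (by positivity) one_pos
  have hε1 : ε ≤ 1 := min_le_right _ _
  have hLε : (L : ℝ) * ε ≤ c := by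
    have h1 : ε ≤ c / ((L : ℝ) + 1) := min_le_left _ _
    rw [le_div_iff₀ (by positivity)] at h1
    nlinarith
  set ρ₁ : ℝ := min δ₁ ρ / 4 with hρ₁_def
  have hρ₁ : 0 < ρ₁ := by positivity
  have hρ₁δ : ρ₁ < δ₁ := by
    have := min_le_left δ₁ ρ; rw [hρ₁_def]; linarith
  have hρ₁ρ : 4 * ρ₁ ≤ ρ := by
    have := min_le_right δ₁ ρ; rw [hρ₁_def]; linarith
  -- the uniform descent estimate
  have hdesc : ∀ y ∈ ball p ρ₁, ∀ l : ℝ, 0 < l → l < ρ₁ →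
      ∀ w : EuclideanSpace ℝ (Fin n), ‖w - u‖ < ε →
      V (y + l • w) - V y ≤ -(c * l) := by
    intro y hy l hl hlρ w hw
    have hyδ : y ∈ ball p δ₁ := ball_subset_ball hρ₁δ.le hy
    have hynorm : ‖y - p‖ < ρ₁ := mem_ball_iff_norm.mp hy
    have hwnorm : ‖w‖ ≤ 2 := by
      calc ‖w‖ = ‖(w - u) + u‖ := by rw [sub_add_cancel]
        _ ≤ ‖w - u‖ + ‖u‖ := norm_add_le _ _
        _ ≤ 2 := by rw [hu]; linarith [hw, hε1]
    have hmem1 : y + l • u ∈ t := by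
      apply hρt
      rw [mem_ball_iff_norm]
      calc ‖y + l • u - p‖ = ‖(y - p) + l • u‖ := by
            rw [show y + l • u - p = (y - p) + l • u from by abel]
        _ ≤ ‖y - p‖ + ‖l • u‖ := norm_add_le _ _
        _ = ‖y - p‖ + l := by rw [norm_smul, hu, Real.norm_eq_abs, abs_of_pos hl, mul_one]
        _ < ρ := by linarith
    have hmem2 : y + l • w ∈ t := by
      apply hρt
      rw [mem_ball_iff_norm]
      calc ‖y + l • w - p‖ = ‖(y - p) + l • w‖ := by
            rw [show y + l • w - p = (y - p) + l • w from by abel]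
        _ ≤ ‖y - p‖ + ‖l • w‖ := norm_add_le _ _
        _ = ‖y - p‖ + l * ‖w‖ := by rw [norm_smul, Real.norm_eq_abs, abs_of_pos hl]
        _ < ρ := by nlinarith [mul_le_mul_of_nonneg_left hwnorm hl.le]
    have hlip := hL.dist_le_mul _ hmem2 _ hmem1
    have hdist : dist (y + l • w) (y + l • u) = l * ‖w - u‖ := by
      rw [dist_eq_norm]
      have : y + l • w - (y + l • u) = l • (w - u) := by
        rw [smul_sub]; abel
      rw [this, norm_smul, Real.norm_eq_abs, abs_of_pos hl]
    have h1 : V (y + l • w) - V (y + l • u) ≤ (L : ℝ) * (l * ‖w - u‖) := by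
      calc V (y + l • w) - V (y + l • u) ≤ |V (y + l • w) - V (y + l • u)| := le_abs_self _
        _ = dist (V (y + l • w)) (V (y + l • u)) := (Real.dist_eq _ _).symm
        _ ≤ (L : ℝ) * dist (y + l • w) (y + l • u) := hlip
        _ = (L : ℝ) * (l * ‖w - u‖) := by rw [hdist]
    have h2 := hru y hyδ l hl (hlρ.trans hρ₁δ)
    have h3 : (L : ℝ) * (l * ‖w - u‖) ≤ c * l := by
      have h4 : ‖w - u‖ ≤ ε := hw.le
      have h5 : (L : ℝ) * ‖w - u‖ ≤ (L : ℝ) * ε := mul_le_mul_of_nonneg_left h4 hLnn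
      have h6 : (L : ℝ) * ‖w - u‖ ≤ c := le_trans h5 hLε
      calc (L : ℝ) * (l * ‖w - u‖) = ((L : ℝ) * ‖w - u‖) * l := by ring
        _ ≤ c * l := mul_le_mul_of_nonneg_right h6 hl.le
    have hrc : r' * l = -(2 * c) * l := by rw [hc_def]; ring
    linarith
  -- step threshold and energy threshold
  set l₁ : ℝ := min (ρ₁ / 4) (c * τmin / 2) with hl₁_def
  have hl₁ : 0 < l₁ := lt_min (by positivity) (by positivity)
  have hl₁ρ : l₁ ≤ ρ₁ / 4 := min_le_left _ _
  have hl₁c : l₁ ≤ c * τmin / 2 := min_le_right _ _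
  set m : ℝ := l₁^2 / τmax with hm_def
  have hm : 0 < m := by positivity
  -- key lemma: a "good" step has energy at least m
  have hgood : ∀ j, x j ∈ ball p (ρ₁ / 2) → ‖d j - u‖ < ε → m ≤ e j := by
    intro j hxj hdj
    have hxjρ₁ : x j ∈ ball p ρ₁ := ball_subset_ball (by linarith) hxj
    have hxjn : ‖x j - p‖ < ρ₁ / 2 := mem_ball_iff_norm.mp hxj
    have hτj := hτ j
    have hτjp := hτpos j
    rcases hupdate j with ⟨β, hβ, heq, hx1⟩ | ⟨hno, hx1⟩
    · -- a step was taken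
      have hVd := hdec j β hβ heq
      have hej : e j = τ j * β^2 := by
        simp only [he_def]; rw [hx1]; linarith
      set s : ℝ := τ j * |β| with hs_def
      have hspos : 0 < s := by
        have : 0 < |β| := abs_pos.mpr hβ
        positivity
      by_cases hs : s < l₁
      · exfalso
        have hsρ : s < ρ₁ := by linarith
        rcases lt_or_gt_of_ne hβ with hβneg | hβpos
        · -- β < 0 : the step moves along +d j
          have hls : τ j * β = -s := by
            rw [hs_def, abs_of_neg hβneg]; ring
          have hpt : x j + s • d j = x j - (τ j * β) • d j := by
            rw [hls, neg_smul, sub_neg_eq_add]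
          have h := hdesc (x j) hxjρ₁ s hspos hsρ (d j) hdj
          rw [hpt, hVd] at h
          -- -(τ j * β^2) ≤ -(c*s), s^2 = τ j^2 β^2
          have hsq : s^2 = (τ j)^2 * β^2 := by
            rw [hs_def, mul_pow, sq_abs]
          have h1 : c * s ≤ τ j * β^2 := by linarith
          have h2 : c * s * τ j ≤ s^2 := by
            calc c * s * τ j ≤ (τ j * β^2) * τ j :=
                  mul_le_mul_of_nonneg_right h1 hτjp.le
              _ = s^2 := by rw [hsq]; ring
          have h3 : c * τ j ≤ s := by
            have h4 : c * τ j * s ≤ s * s := by nlinarith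
            exact le_of_mul_le_mul_right h4 hspos
          have h5 : c * τmin ≤ c * τ j := mul_le_mul_of_nonneg_left hτj.1 hc.le
          have h6 : 0 < c * τ j := mul_pos hc hτjp
          linarith
        · -- β > 0 : the step moves along -d j
          have hls : τ j * β = s := by rw [hs_def, abs_of_pos hβpos]
          set y' : EuclideanSpace ℝ (Fin n) := x j - s • d j with hy'_def
          have hy'p : y' - p = (x j - p) + (-(s • d j)) := by
            rw [hy'_def]; abel
          have hy' : y' ∈ ball p ρ₁ := by
            rw [mem_ball_iff_norm, hy'p]
            calc ‖(x j - p) + (-(s • d j))‖ ≤ ‖x j - p‖ + ‖-(s • d j)‖ := norm_add_le _ _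
              _ = ‖x j - p‖ + s := by
                  rw [norm_neg, norm_smul, hd j, Real.norm_eq_abs, abs_of_pos hspos, mul_one]
              _ < ρ₁ := by linarith
          have h := hdesc y' hy' s hspos hsρ (d j) hdj
          have hpt : y' + s • d j = x j := by rw [hy'_def, sub_add_cancel]
          rw [hpt] at h
          -- V y' - V (x j) = -(τ j β²)
          have h2 : V y' - V (x j) = -(τ j * β^2) := by
            have hyx : y' = x j - (τ j * β) • d j := by rw [hy'_def, hls]
            rw [hyx]; exact hVd
          linarith [mul_pos hc hspos, mul_nonneg hτjp.le (sq_nonneg β)]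
      · push_neg at hs
        rw [hej, hm_def, div_le_iff₀ hτmaxpos]
        have hsq : s^2 = (τ j)^2 * β^2 := by rw [hs_def, mul_pow, sq_abs]
        have h1 : l₁^2 ≤ s^2 := pow_le_pow_left₀ hl₁.le hs 2
        have h2 : (τ j)^2 * β^2 ≤ τmax * (τ j * β^2) := by
          linarith [mul_nonneg (mul_nonneg (sub_nonneg.mpr hτj.2) hτjp.le) (sq_nonneg β)]
        linarith [hsq ▸ h1]
    · -- no admissible β exists : contradiction, we construct one via IVT
      exfalso
      apply hno
      set g : ℝ → ℝ := fun β => V (x j - (τ j * β) • d j) - V (x j) + τ j * β^2 with hg_def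
      have hgc : Continuous g := by
        have h1 : Continuous fun β : ℝ => x j - (τ j * β) • d j :=
          continuous_const.sub ((continuous_const.mul continuous_id).smul continuous_const)
        exact ((hVc.comp h1).sub continuous_const).add
          (continuous_const.mul (continuous_pow 2))
      set q : ℝ := (V (x j) - B) / τmin + 1 with hq_def
      have hq : 0 ≤ q := by
        have h0 : 0 ≤ (V (x j) - B) / τmin :=
          div_nonneg (by linarith [hBle (x j)]) hτmin.le
        rw [hq_def]
        linarith
      set a : ℝ := -(Real.sqrt q + l₁ / τmin + 1) with ha_def
      set b : ℝ := -(l₁ / τ j) with hb_def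
      have hsqrt : Real.sqrt q ^ 2 = q := Real.sq_sqrt hq
      have hsqrtnn : 0 ≤ Real.sqrt q := Real.sqrt_nonneg q
      have hab : a ≤ b := by
        have h1 : l₁ / τ j ≤ l₁ / τmin := by
          apply div_le_div_of_nonneg_left hl₁.le hτmin hτj.1
        rw [ha_def, hb_def]; linarith
      have hbneg : b < 0 := by
        rw [hb_def]
        have : 0 < l₁ / τ j := by positivity
        linarith
      have hga : 0 < g a := by
        have h1 : B ≤ V (x j - (τ j * a) • d j) := hBle _
        have h2 : a^2 ≥ q := by
          have hw : (0:ℝ) ≤ l₁ / τmin + 1 := by positivity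
          have hexp : a^2 = Real.sqrt q ^ 2
              + 2 * (Real.sqrt q * (l₁ / τmin + 1)) + (l₁ / τmin + 1)^2 := by
            rw [ha_def]; ring
          rw [ge_iff_le, hexp, hsqrt]
          linarith [mul_nonneg hsqrtnn hw, sq_nonneg (l₁ / τmin + 1)]
        have h3 : τmin * a^2 ≤ τ j * a^2 :=
          mul_le_mul_of_nonneg_right hτj.1 (sq_nonneg a)
        have h4 : τmin * q = V (x j) - B + τmin := by
          rw [hq_def, mul_add, mul_one, mul_div_cancel₀ _ (ne_of_gt hτmin)]
        have h5 : τmin * q ≤ τmin * a^2 := mul_le_mul_of_nonneg_left h2 hτmin.le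
        simp only [hg_def]
        linarith
      have hgb : g b < 0 := by
        have hτb : τ j * b = -l₁ := by
          rw [hb_def, mul_neg, mul_div_cancel₀ _ (ne_of_gt hτjp)]
        have hpt : x j - (τ j * b) • d j = x j + l₁ • d j := by
          rw [hτb, neg_smul, sub_neg_eq_add]
        have h := hdesc (x j) hxjρ₁ l₁ hl₁ (by linarith) (d j) hdj
        have hτb2 : τ j * b^2 = l₁^2 / τ j := by
          rw [hb_def, neg_pow]
          field_simp
        have h6 : l₁^2 / τ j < c * l₁ := by
          rw [div_lt_iff₀ hτjp]
          have hA : l₁ < c * τ j := by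
            have hB := mul_le_mul_of_nonneg_left hτj.1 hc.le
            have hC := mul_pos hc hτmin
            linarith
          have hD : 0 < (c * τ j - l₁) * l₁ := mul_pos (by linarith) hl₁
          linarith [hD]
        simp only [hg_def]
        rw [hpt, hτb2]
        linarith
      have hsub : Set.Icc (g b) (g a) ⊆ g '' Set.Icc a b :=
        intermediate_value_Icc' hab hgc.continuousOn
      obtain ⟨β, hβmem, hgβ⟩ := hsub ⟨hgb.le, hga.le⟩
      have hβneg : β < 0 := lt_of_le_of_lt hβmem.2 hbneg
      refine ⟨β, ne_of_lt hβneg, ?_⟩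
      have h5 : V (x j - (τ j * β) • d j) - V (x j) = -(τ j * β^2) := by
        have : g β = 0 := hgβ
        simp only [hg_def] at this
        linarith
      rw [h5]
      have hne : τ j * β ≠ 0 := mul_ne_zero (ne_of_gt hτjp) (ne_of_lt hβneg)
      field_simp
  -- now derive the contradiction from the cluster point
  obtain ⟨N, hN⟩ := hcyc ε hε
  have hN1 : 0 < N := by
    obtain ⟨i, hi, -⟩ := hN 0 u hu
    omega
  have hNR : (0:ℝ) < N := by exact_mod_cast hN1
  have hK₁ : ∀ᶠ k in atTop, e k < m := he0.eventually_lt_const hm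
  have hK₂ : ∀ᶠ k in atTop, ‖x (k+1) - x k‖ < ρ₁ / (4 * N) :=
    hs0.eventually_lt_const (by positivity)
  rw [eventually_atTop] at hK₁ hK₂
  obtain ⟨K₁, hK₁⟩ := hK₁
  obtain ⟨K₂, hK₂⟩ := hK₂
  rw [mapClusterPt_iff_frequently] at hp
  have hfreq := hp (ball p (ρ₁ / 4)) (ball_mem_nhds p (by positivity))
  rw [frequently_atTop] at hfreq
  obtain ⟨k, hk, hxk⟩ := hfreq (max K₁ K₂)
  have hkK₁ : K₁ ≤ k := le_trans (le_max_left _ _) hk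
  have hkK₂ : K₂ ≤ k := le_trans (le_max_right _ _) hk
  -- the window stays near p
  have hwin : ∀ i, i ≤ N → ‖x (k+i) - x k‖ ≤ i * (ρ₁ / (4 * N)) := by
    intro i
    induction i with
    | zero => simp
    | succ i ih =>
      intro hiN
      have h1 := ih (by omega)
      have h2 : ‖x (k+i+1) - x (k+i)‖ < ρ₁ / (4 * N) := hK₂ (k+i) (by omega)
      calc ‖x (k+(i+1)) - x k‖ ≤ ‖x (k+(i+1)) - x (k+i)‖ + ‖x (k+i) - x k‖ :=
            norm_sub_le_norm_sub_add_norm_sub _ _ _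
        _ ≤ ρ₁ / (4 * N) + i * (ρ₁ / (4 * N)) := by
            have : k + (i+1) = k + i + 1 := by omega
            rw [this]
            linarith
        _ = (i+1 : ℕ) * (ρ₁ / (4 * N)) := by push_cast; ring
  obtain ⟨i, hiN, hdi⟩ := hN k u hu
  have hxj : x (k+i) ∈ ball p (ρ₁ / 2) := by
    rw [mem_ball_iff_norm]
    have h1 := hwin i (le_of_lt hiN)
    have h2 : ‖x k - p‖ < ρ₁ / 4 := mem_ball_iff_norm.mp hxk
    have h3 : (i:ℝ) * (ρ₁ / (4 * N)) ≤ ρ₁ / 4 := by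
      have hi : (i:ℝ) ≤ N := by exact_mod_cast le_of_lt hiN
      have hN0 : (N:ℝ) ≠ 0 := ne_of_gt hNR
      have h4 : (i:ℝ) * (ρ₁ / (4 * N)) ≤ (N:ℝ) * (ρ₁ / (4 * N)) :=
        mul_le_mul_of_nonneg_right hi (by positivity)
      have h5 : (N:ℝ) * (ρ₁ / (4 * N)) = ρ₁ / 4 := by
        field_simp
      linarith
    calc ‖x (k+i) - p‖ ≤ ‖x (k+i) - x k‖ + ‖x k - p‖ :=
          norm_sub_le_norm_sub_add_norm_sub _ _ _
      _ < ρ₁ / 2 := by linarith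
  have hgj := hgood (k+i) hxj (by rw [norm_sub_rev]; exact hdi)
  have hej := hK₁ (k+i) (by omega)
  linarith
end

section
/- Suppose under the hypotheses of the Itoh–Abe method there exist y, ε, δ > 0 and a unit vector d such that (V(z - λe) - V(z))/λ ≤ -ε for all z ∈ B_δ(y), unit e ∈ B_δ(d), and λ ∈ (0, δ). If the k-th iterate satisfies x^k ∈ B_δ(y) and d^k ∈ B_δ(d), then V(x^k) - V(x^{k+1}) ≥ min{ε² τ_min, δ²/τ_max}. -/
open Metric

/-- A uniform descent estimate for one Itoh–Abe step taken inside a ball with a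
uniform descent direction. -/
theorem itohAbe_step_uniform_decrease {n : ℕ}
    (V : EuclideanSpace ℝ (Fin n) → ℝ)
    (τmin τmax ε δ : ℝ) (hτmin : 0 < τmin) (hτminmax : τmin ≤ τmax)
    (hε : 0 < ε) (hδ : 0 < δ)
    (y dbar : EuclideanSpace ℝ (Fin n))
    (hdesc : ∀ z ∈ ball y δ, ∀ e : EuclideanSpace ℝ (Fin n), ‖e‖ = 1 →
      e ∈ ball dbar δ → ∀ l : ℝ, 0 < l → l < δ → (V (z - l • e) - V z) / l ≤ -ε)
    (xk dk xk1 : EuclideanSpace ℝ (Fin n)) (τk l : ℝ)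
    (hτk : τk ∈ Set.Icc τmin τmax) (hl : 0 < l)
    (hdk : ‖dk‖ = 1) (hxk : xk ∈ ball y δ) (hdkb : dk ∈ ball dbar δ)
    (hup : xk1 = xk - l • dk)
    (hdiss : V xk1 - V xk = -(1 / τk) * ‖xk1 - xk‖ ^ 2) :
    min (ε ^ 2 * τmin) (δ ^ 2 / τmax) ≤ V xk - V xk1 := by
  have hτk0 : 0 < τk := lt_of_lt_of_le hτmin hτk.1
  have hτmax0 : 0 < τmax := lt_of_lt_of_le hτmin hτminmax
  have hnorm : ‖xk1 - xk‖ = l := by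
    rw [hup]
    simp [norm_smul, abs_of_pos hl, hdk]
  have hV : V xk - V xk1 = l ^ 2 / τk := by
    rw [hnorm] at hdiss
    field_simp at hdiss ⊢
    linarith
  rcases lt_or_ge l δ with hlt | hge
  · have h1 := hdesc xk hxk dk hdk hdkb l hl hlt
    rw [← hup] at h1
    have hεl : ε * l ≤ V xk - V xk1 := by
      have := (div_le_iff₀ hl).mp h1
      linarith
    have hl2 : ε * τmin ≤ l := by
      rw [hV] at hεl
      have : ε * τk ≤ l := by
        rw [div_eq_mul_inv] at hεl
        have h2 : ε * l * τk ≤ l ^ 2 := by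
          have := mul_le_mul_of_nonneg_right hεl hτk0.le
          field_simp at this
          nlinarith [this, hl]
        nlinarith
      nlinarith [hτk.1]
    refine le_trans (min_le_left _ _) ?_
    nlinarith
  · refine le_trans (min_le_right _ _) ?_
    rw [hV]
    apply div_le_div₀ (by positivity) (by nlinarith) hτk0 hτk.2
end

section
/- Let V : ℝⁿ → ℝ be continuously differentiable and R an orthogonal matrix mapping an orthonormal basis (f^i) to the standard basis (Rf^i = e^i). Then the rotated Itoh–Abe map ∇̄_R V(x,y) = Rᵀ ∇̂_R V(x,y), where (∇̂_R V(x,y))_i = [V(x + Σ_{j≤i} ⟨y-x, f^j⟩f^j) - V(x + Σ_{j<i} ⟨y-x, f^j⟩f^j)] / ⟨y-x, f^i⟩, satisfies the discrete gradient consistency property ⟨∇̄_R V(x,y), y - x⟩ = V(y) - V(x) for all x ≠ y with ⟨y-x, f^i⟩ ≠ 0 for all i. -/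
open scoped InnerProductSpace
open Finset

/-- The rotated Itoh–Abe discrete gradient satisfies the consistency property
`⟨∇̄_R V(x,y), y - x⟩ = V(y) - V(x)`. -/
theorem rotatedItohAbe_consistency {n : ℕ}
    (V : EuclideanSpace ℝ (Fin n) → ℝ) (hV : ContDiff ℝ 1 V)
    (b : OrthonormalBasis (Fin n) ℝ (EuclideanSpace ℝ (Fin n)))
    (R : EuclideanSpace ℝ (Fin n) ≃ₗᵢ[ℝ] EuclideanSpace ℝ (Fin n))
    (hR : ∀ i, R (b i) = EuclideanSpace.single i (1:ℝ))
    (x y : EuclideanSpace ℝ (Fin n)) (hxy : x ≠ y)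
    (h : ∀ i, ⟪y - x, b i⟫_ℝ ≠ 0) :
    ⟪R.symm (∑ i : Fin n,
        ((V (x + ∑ j ∈ Finset.univ.filter (fun j => j ≤ i), ⟪y - x, b j⟫_ℝ • b j) -
          V (x + ∑ j ∈ Finset.univ.filter (fun j => j < i), ⟪y - x, b j⟫_ℝ • b j)) /
            ⟪y - x, b i⟫_ℝ) • EuclideanSpace.single i (1:ℝ)),
      y - x⟫_ℝ = V y - V x := by
  set c : Fin n → ℝ := fun i => ⟪y - x, b i⟫_ℝ with hc
  set g : ℕ → ℝ := fun k =>
    V (x + ∑ j ∈ Finset.univ.filter (fun j : Fin n => (j : ℕ) < k), c j • b j) with hg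
  have hsingle : ∀ i, R.symm (EuclideanSpace.single i (1:ℝ)) = b i := by
    intro i; rw [← hR i, LinearIsometryEquiv.symm_apply_apply]
  rw [map_sum]
  simp_rw [LinearIsometryEquiv.map_smul, hsingle, sum_inner, real_inner_smul_left]
  have hterm : ∀ i : Fin n,
      ((V (x + ∑ j ∈ Finset.univ.filter (fun j => j ≤ i), ⟪y - x, b j⟫_ℝ • b j) -
          V (x + ∑ j ∈ Finset.univ.filter (fun j => j < i), ⟪y - x, b j⟫_ℝ • b j)) /
            ⟪y - x, b i⟫_ℝ) * ⟪b i, y - x⟫_ℝ = g ((i : ℕ) + 1) - g (i : ℕ) := by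
    intro i
    have h1 : Finset.univ.filter (fun j : Fin n => j ≤ i) =
        Finset.univ.filter (fun j : Fin n => (j : ℕ) < (i : ℕ) + 1) := by
      apply Finset.filter_congr; intro j _
      rw [Fin.le_iff_val_le_val]; exact Nat.lt_succ_iff.symm
    have h2 : Finset.univ.filter (fun j : Fin n => j < i) =
        Finset.univ.filter (fun j : Fin n => (j : ℕ) < (i : ℕ)) := by
      apply Finset.filter_congr; intro j _
      exact Fin.lt_iff_val_lt_val
    rw [real_inner_comm (y - x) (b i), h1, h2]
    exact div_mul_cancel₀ _ (h i)
  calc ∑ i : Fin n, ((V (x + ∑ j ∈ Finset.univ.filter (fun j => j ≤ i), ⟪y - x, b j⟫_ℝ • b j) -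
          V (x + ∑ j ∈ Finset.univ.filter (fun j => j < i), ⟪y - x, b j⟫_ℝ • b j)) /
            ⟪y - x, b i⟫_ℝ) * ⟪b i, y - x⟫_ℝ
      = ∑ i : Fin n, (g ((i : ℕ) + 1) - g (i : ℕ)) := by
        exact Finset.sum_congr rfl fun i _ => hterm i
    _ = ∑ k ∈ Finset.range n, (g (k + 1) - g k) := by
        rw [Finset.sum_range fun k => g (k + 1) - g k]
    _ = g n - g 0 := Finset.sum_range_sub g n
    _ = V y - V x := by
        have h0 : g 0 = V x := by simp [hg]
        have hn : g n = V y := by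
          have : Finset.univ.filter (fun j : Fin n => (j : ℕ) < n) = Finset.univ := by
            apply Finset.filter_true_of_mem; intro j _; exact j.isLt
          have hsum : ∑ j : Fin n, c j • b j = y - x := by
            calc ∑ j : Fin n, c j • b j
                = ∑ j : Fin n, ⟪b j, y - x⟫_ℝ • b j := by
                  exact Finset.sum_congr rfl fun j _ => by
                    rw [hc]; rw [real_inner_comm (y - x) (b j)]
              _ = y - x := b.sum_repr' (y - x)
          simp [hg, this, hsum]
        rw [h0, hn]
end

section
/- Let V : ℝⁿ → ℝ be continuously differentiable and R an orthogonal matrix with Rf^i = e^i for an orthonormal basis (f^i). Then the rotated Itoh–Abe map ∇̄_R V(x,y) satisfies the mean value property: ∇̄_R V(x,y) → ∇V(x) as y → x (along y with ⟨y-x, f^i⟩ ≠ 0 for all i). -/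
open scoped InnerProductSpace
open Filter Finset

/-- The rotated Itoh–Abe discrete gradient satisfies the mean value property:
it converges to the gradient `∇V(x)` as `y → x` along admissible directions. -/
theorem rotatedItohAbe_mean_value {n : ℕ}
    (V : EuclideanSpace ℝ (Fin n) → ℝ) (hV : ContDiff ℝ 1 V)
    (b : OrthonormalBasis (Fin n) ℝ (EuclideanSpace ℝ (Fin n)))
    (R : EuclideanSpace ℝ (Fin n) ≃ₗᵢ[ℝ] EuclideanSpace ℝ (Fin n))
    (hR : ∀ i, R (b i) = EuclideanSpace.single i (1:ℝ))
    (x : EuclideanSpace ℝ (Fin n)) :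
    Tendsto (fun y : EuclideanSpace ℝ (Fin n) => R.symm (∑ i : Fin n,
        ((V (x + ∑ j ∈ Finset.univ.filter (fun j => j ≤ i), ⟪y - x, b j⟫_ℝ • b j) -
          V (x + ∑ j ∈ Finset.univ.filter (fun j => j < i), ⟪y - x, b j⟫_ℝ • b j)) /
            ⟪y - x, b i⟫_ℝ) • EuclideanSpace.single i (1:ℝ)))
      (nhdsWithin x {y : EuclideanSpace ℝ (Fin n) | ∀ i, ⟪y - x, b i⟫_ℝ ≠ 0})
      (nhds (gradient V x)) := by
  set f' := fderiv ℝ V x with hf'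
  set S := {y : EuclideanSpace ℝ (Fin n) | ∀ i, ⟪y - x, b i⟫_ℝ ≠ 0} with hS
  have hRb : ∀ i, R.symm (EuclideanSpace.single i (1:ℝ)) = b i := by
    intro i; rw [← hR i, R.symm_apply_apply]
  -- The limit equals R.symm of the sum of coordinates of the gradient
  have hgrad : gradient V x =
      R.symm (∑ i : Fin n, (f' (b i)) • EuclideanSpace.single i (1:ℝ)) := by
    rw [map_sum]
    simp only [map_smul]
    have : ∀ i : Fin n, (f' (b i)) • R.symm (EuclideanSpace.single i (1:ℝ))
        = ⟪b i, gradient V x⟫_ℝ • b i := by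
      intro i
      rw [hRb i, real_inner_comm]
      congr 1
      exact (InnerProductSpace.toDual_symm_apply (𝕜 := ℝ)).symm
    simp only [this]
    exact (b.sum_repr' (gradient V x)).symm
  rw [hgrad]
  apply Tendsto.comp (R.symm.continuous.tendsto _)
  apply tendsto_finset_sum
  intro i _
  apply Tendsto.smul_const
  -- per-coordinate convergence
  have hstrict : HasStrictFDerivAt V f' x :=
    hV.contDiffAt.hasStrictFDerivAt one_ne_zero
  set A : EuclideanSpace ℝ (Fin n) → EuclideanSpace ℝ (Fin n) :=
    fun y => x + ∑ j ∈ Finset.univ.filter (fun j => j ≤ i), ⟪y - x, b j⟫_ℝ • b j with hA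
  set B : EuclideanSpace ℝ (Fin n) → EuclideanSpace ℝ (Fin n) :=
    fun y => x + ∑ j ∈ Finset.univ.filter (fun j => j < i), ⟪y - x, b j⟫_ℝ • b j with hB
  set c : EuclideanSpace ℝ (Fin n) → ℝ := fun y => ⟪y - x, b i⟫_ℝ with hc
  have hAB : ∀ y, A y - B y = c y • b i := by
    intro y
    have : Finset.univ.filter (fun j => j ≤ i) =
        insert i (Finset.univ.filter (fun j => j < i)) := by
      ext j
      simp [Finset.mem_filter, Finset.mem_insert, le_iff_lt_or_eq, or_comm, eq_comm]
    simp only [hA, hB, this]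
    rw [Finset.sum_insert (by simp)]
    abel
  -- continuity of A, B
  have hAcont : Continuous A := by
    apply continuous_const.add
    apply continuous_finset_sum
    intro j _
    exact (((continuous_id.sub continuous_const).inner (𝕜 := ℝ) continuous_const).smul
      continuous_const)
  have hBcont : Continuous B := by
    apply continuous_const.add
    apply continuous_finset_sum
    intro j _
    exact (((continuous_id.sub continuous_const).inner (𝕜 := ℝ) continuous_const).smul
      continuous_const)
  have hAx : A x = x := by simp [hA]
  have hBx : B x = x := by simp [hB]
  have hφ : Tendsto (fun y => (A y, B y)) (nhdsWithin x S) (nhds (x, x)) := by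
    rw [nhds_prod_eq]
    refine Tendsto.prodMk ?_ ?_
    · exact (hAcont.tendsto x).mono_left nhdsWithin_le_nhds |>.congr (fun y => rfl)
        |>.mono_right (by rw [hAx])
    · exact (hBcont.tendsto x).mono_left nhdsWithin_le_nhds |>.congr (fun y => rfl)
        |>.mono_right (by rw [hBx])
  -- little-o estimate
  have hlo : (fun y => V (A y) - V (B y) - f' (A y - B y))
      =o[nhdsWithin x S] (fun y => A y - B y) :=
    hstrict.isLittleO.comp_tendsto hφ
  have hlo2 : (fun y => V (A y) - V (B y) - c y * f' (b i))
      =o[nhdsWithin x S] (fun y => c y) := by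
    have h1 : (fun y => V (A y) - V (B y) - c y * f' (b i))
        = fun y => V (A y) - V (B y) - f' (A y - B y) := by
      funext y
      rw [hAB y, map_smul]
      simp [smul_eq_mul]
    rw [h1]
    refine hlo.trans_isBigO ?_
    apply Asymptotics.isBigO_of_le
    intro y
    rw [hAB y, norm_smul, b.orthonormal.1 i]
    simp
  have hdiv : Tendsto (fun y => (V (A y) - V (B y) - c y * f' (b i)) / c y)
      (nhdsWithin x S) (nhds 0) := hlo2.tendsto_div_nhds_zero
  have key : Tendsto (fun y => (V (A y) - V (B y)) / c y)
      (nhdsWithin x S) (nhds (f' (b i))) := by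
    have := hdiv.add_const (f' (b i))
    rw [zero_add] at this
    refine this.congr' ?_
    filter_upwards [self_mem_nhdsWithin] with y hy
    have hcy : c y ≠ 0 := hy i
    field_simp
    ring
  exact key
end

section
/- Let V(x₁, x₂) = √(x₁² + x₂²) on ℝ², and set x^k = (1/k, 0), y^k = (0, 1/k). Then for every k, the Itoh–Abe discrete gradient satisfies ∇̄V(x^k, y^k) = (1, 1), while (1,1) ∉ ∂V(0,0) = closed unit ball; hence the Itoh–Abe discrete gradient at convergent argument pairs need not converge to a Clarke subgradient at the limit. -/
open scoped InnerProductSpace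
open Metric Filter MeasureTheory

/-- The point `(a, b)` of the Euclidean plane. -/
noncomputable def pt (a b : ℝ) : EuclideanSpace ℝ (Fin 2) :=
  (WithLp.equiv 2 (Fin 2 → ℝ)).symm ![a, b]

lemma pt_apply_zero (a b : ℝ) : pt a b 0 = a := rfl
lemma pt_apply_one (a b : ℝ) : pt a b 1 = b := rfl

lemma clarkeDir_norm_eq (V : EuclideanSpace ℝ (Fin 2) → ℝ)
    (hV : ∀ p, V p = ‖p‖) (v : EuclideanSpace ℝ (Fin 2)) :
    clarkeDir V 0 v = ‖v‖ := by
  have hset : {r : ℝ | ∃ δ > 0, ∀ y ∈ ball (0 : EuclideanSpace ℝ (Fin 2)) δ,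
      ∀ l : ℝ, 0 < l → l < δ → (V (y + l • v) - V y) / l ≤ r} = Set.Ici ‖v‖ := by
    ext r
    constructor
    · rintro ⟨δ, hδ, h⟩
      have h0 : (0 : EuclideanSpace ℝ (Fin 2)) ∈ ball (0 : EuclideanSpace ℝ (Fin 2)) δ := by
        simp [hδ]
      have := h 0 h0 (δ/2) (by linarith) (by linarith)
      have hval : (V (0 + (δ/2) • v) - V 0) / (δ/2) = ‖v‖ := by
        rw [hV, hV, zero_add, norm_zero, sub_zero, norm_smul, Real.norm_eq_abs,
          abs_of_pos (show (0:ℝ) < δ/2 by linarith)]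
        exact mul_div_cancel_left₀ ‖v‖ (by linarith)
      rw [hval] at this
      exact this
    · intro hr
      refine ⟨1, one_pos, fun y _ l hl _ => ?_⟩
      rw [hV, hV]
      have h1 : ‖y + l • v‖ - ‖y‖ ≤ ‖l • v‖ := by
        have := norm_add_le y (l • v)
        linarith
      have h2 : ‖l • v‖ = l * ‖v‖ := by
        rw [norm_smul, Real.norm_eq_abs, abs_of_pos hl]
      calc (‖y + l • v‖ - ‖y‖) / l ≤ (l * ‖v‖) / l := by
            gcongr
            rw [← h2]; exact h1
          _ = ‖v‖ := by field_simp
          _ ≤ r := hr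
  rw [clarkeDir, hset, csInf_Ici]

/-- For `V(x₁,x₂) = √(x₁² + x₂²)`, with `x^k = (1/k, 0)` and `y^k = (0, 1/k)`,
the Itoh–Abe discrete gradient equals `(1,1)` for every `k ≥ 1`, yet
`(1,1) ∉ ∂V(0,0)`, which is the closed unit ball: the Itoh–Abe discrete
gradient need not converge to a Clarke subgradient. -/
theorem itohAbe_discreteGradient_not_subgradient
    (V : EuclideanSpace ℝ (Fin 2) → ℝ)
    (hVdef : V = fun p => Real.sqrt (p 0 ^ 2 + p 1 ^ 2)) :
    (∀ k : ℕ, 0 < k →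
      (V (pt 0 0) - V (pt (1 / k) 0)) / ((0 : ℝ) - 1 / k) = 1 ∧
      (V (pt 0 (1 / k)) - V (pt 0 0)) / ((1 / k : ℝ) - 0) = 1) ∧
    clarkeSubdiff V 0 = Metric.closedBall (0 : EuclideanSpace ℝ (Fin 2)) 1 ∧
    pt 1 1 ∉ clarkeSubdiff V 0 := by
  have hV : ∀ p, V p = ‖p‖ := by
    intro p
    rw [hVdef, EuclideanSpace.norm_eq]
    simp [Fin.sum_univ_two, Real.norm_eq_abs, sq_abs]
  have hsub : clarkeSubdiff V 0 = Metric.closedBall (0 : EuclideanSpace ℝ (Fin 2)) 1 := by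
    ext p
    simp only [clarkeSubdiff, Set.mem_setOf_eq, Metric.mem_closedBall, dist_zero_right]
    constructor
    · intro h
      have := h p
      rw [clarkeDir_norm_eq V hV] at this
      rw [real_inner_self_eq_norm_sq] at this
      nlinarith [norm_nonneg p]
    · intro hp v
      rw [clarkeDir_norm_eq V hV]
      calc ⟪v, p⟫_ℝ ≤ ‖v‖ * ‖p‖ := real_inner_le_norm v p
        _ ≤ ‖v‖ * 1 := by
            exact mul_le_mul_of_nonneg_left hp (norm_nonneg v)
        _ = ‖v‖ := mul_one _
  refine ⟨?_, hsub, ?_⟩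
  · intro k hk
    have hk' : (0:ℝ) < 1 / k := by positivity
    constructor
    · rw [hV, hV]
      have h1 : ‖pt (0:ℝ) 0‖ = 0 := by
        rw [EuclideanSpace.norm_eq]
        simp [Fin.sum_univ_two, pt_apply_zero, pt_apply_one]
      have h2 : ‖pt (1/(k:ℝ)) 0‖ = 1/k := by
        rw [EuclideanSpace.norm_eq, Fin.sum_univ_two, pt_apply_zero, pt_apply_one]
        rw [show ‖(1/(k:ℝ))‖^2 + ‖(0:ℝ)‖^2 = (1/(k:ℝ))^2 by
          simp [Real.norm_eq_abs, sq_abs]]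
        exact Real.sqrt_sq hk'.le
      rw [h1, h2]
      field_simp
    · rw [hV, hV]
      have h1 : ‖pt (0:ℝ) 0‖ = 0 := by
        rw [EuclideanSpace.norm_eq]
        simp [Fin.sum_univ_two, pt_apply_zero, pt_apply_one]
      have h2 : ‖pt 0 (1/(k:ℝ))‖ = 1/k := by
        rw [EuclideanSpace.norm_eq, Fin.sum_univ_two, pt_apply_zero, pt_apply_one]
        rw [show ‖(0:ℝ)‖^2 + ‖(1/(k:ℝ))‖^2 = (1/(k:ℝ))^2 by
          simp [Real.norm_eq_abs, sq_abs]]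
        exact Real.sqrt_sq hk'.le
      rw [h1, h2]
      field_simp
  · rw [hsub]
    simp only [Metric.mem_closedBall, dist_zero_right, not_le]
    have : ‖pt (1:ℝ) 1‖ = Real.sqrt 2 := by
      rw [EuclideanSpace.norm_eq]
      norm_num [Fin.sum_univ_two, pt_apply_zero, pt_apply_one]
    rw [this]
    nlinarith [Real.sq_sqrt (show (0:ℝ) ≤ 2 by norm_num), Real.sqrt_nonneg 2]
end
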